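/- Let Ψ be a bounded solution of the Hamiltonian system J Ψ' = (λE + F)Ψ on (0,∞) with E, F bounded symmetric matrix functions, and suppose Ψ ∈ L²((0,∞); ℝ^{2m}). Then the kernel K(x,y) = ⟨JΨ(x), Ψ(y)⟩/(x-y) defines a Hilbert–Schmidt operator on L²(0,∞), i.e. ∫₀^∞∫₀^∞ |K(x,y)|² dx dy < ∞. -/

import Mathlib

open Matrix Set MeasureTheory

/-- Bound on a dot product by the sup norms. -/
lemma stmt9_abs_dot_le {ι : Type*} [Fintype ι] (u v : ι → ℝ) :
    |u ⬝ᵥ v| ≤ (Fintype.card ι : ℝ) * ‖u‖ * ‖v‖ := by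
  classical
  calc |u ⬝ᵥ v| = |∑ i, u i * v i| := rfl
  _ ≤ ∑ i, |u i * v i| := Finset.abs_sum_le_sum_abs _ _
  _ ≤ ∑ _i : ι, ‖u‖ * ‖v‖ := by
      refine Finset.sum_le_sum fun i _ => ?_
      rw [abs_mul]
      have h1 : |u i| ≤ ‖u‖ := by simpa [Real.norm_eq_abs] using norm_le_pi_norm u i
      have h2 : |v i| ≤ ‖v‖ := by simpa [Real.norm_eq_abs] using norm_le_pi_norm v i
      exact mul_le_mul h1 h2 (abs_nonneg _) (le_trans (abs_nonneg _) h1)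
  _ = (Fintype.card ι : ℝ) * ‖u‖ * ‖v‖ := by
      rw [Finset.sum_const, Finset.card_univ, nsmul_eq_mul, mul_assoc]

/-- Let `Ψ` be a bounded solution of the Hamiltonian system
`J Ψ' = (λE + F)Ψ` on `(0,∞)` with `E, F` bounded symmetric matrix functions, and
`Ψ ∈ L²((0,∞); ℝ^{2m})`.  Then `K(x,y) = ⟨JΨ(x), Ψ(y)⟩/(x−y)` is a Hilbert–Schmidt
kernel: `∫₀^∞∫₀^∞ |K(x,y)|² dx dy < ∞`. -/
theorem stmt9 (m : ℕ) (lam : ℝ)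
    (J : Matrix (Fin m ⊕ Fin m) (Fin m ⊕ Fin m) ℝ)
    (hJ : J = Matrix.fromBlocks 0 (-1) 1 0)
    (E F : ℝ → Matrix (Fin m ⊕ Fin m) (Fin m ⊕ Fin m) ℝ)
    (hE : ∀ x : ℝ, 0 < x → (E x).IsSymm) (hF : ∀ x : ℝ, 0 < x → (F x).IsSymm)
    (c₁ c₂ : ℝ)
    (hEbdd : ∀ x : ℝ, 0 < x → ∀ i j, |E x i j| ≤ c₁)
    (hFbdd : ∀ x : ℝ, 0 < x → ∀ i j, |F x i j| ≤ c₂)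
    (Ψ Ψ' : ℝ → (Fin m ⊕ Fin m → ℝ))
    (hΨ : ∀ x : ℝ, 0 < x → HasDerivAt Ψ (Ψ' x) x)
    (hΨcont : ContinuousOn Ψ (Ioi (0 : ℝ)))
    (M : ℝ) (hΨbdd : ∀ x : ℝ, 0 < x → ‖Ψ x‖ ≤ M)
    (hΨL2 : IntegrableOn (fun x => ‖Ψ x‖ ^ 2) (Ioi (0 : ℝ)))
    (heq : ∀ x : ℝ, 0 < x → J.mulVec (Ψ' x) = (lam • E x + F x).mulVec (Ψ x)) :
    IntegrableOn
      (fun p : ℝ × ℝ => ((J.mulVec (Ψ p.1) ⬝ᵥ Ψ p.2) / (p.1 - p.2)) ^ 2)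
      (Ioi (0 : ℝ) ×ˢ Ioi (0 : ℝ)) := by
  classical
  -- basic facts about J
  have hJmv : ∀ v : Fin m ⊕ Fin m → ℝ, J.mulVec v
      = Sum.elim (fun i => -v (Sum.inr i)) (fun i => v (Sum.inl i)) := by
    intro v
    rw [hJ, Matrix.fromBlocks_mulVec]
    funext i
    cases i <;> simp [Matrix.neg_mulVec]
  have hJle : ∀ v : Fin m ⊕ Fin m → ℝ, ‖J.mulVec v‖ ≤ ‖v‖ := by
    intro v
    rw [hJmv]
    refine (pi_norm_le_iff_of_nonneg (norm_nonneg v)).2 fun i => ?_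
    cases i with
    | inl i => simpa [Real.norm_eq_abs] using norm_le_pi_norm v (Sum.inr i)
    | inr i => simpa [Real.norm_eq_abs] using norm_le_pi_norm v (Sum.inl i)
  have hJJ : ∀ v : Fin m ⊕ Fin m → ℝ, J.mulVec (J.mulVec v) = -v := by
    intro v
    rw [hJmv, hJmv]
    funext i
    cases i <;> simp
  have hJzero : ∀ v : Fin m ⊕ Fin m → ℝ, J.mulVec v ⬝ᵥ v = 0 := by
    intro v
    rw [hJmv]
    simp only [dotProduct, Fintype.sum_sum_type, Sum.elim_inl, Sum.elim_inr]
    have h : ∀ i : Fin m, -v (Sum.inr i) * v (Sum.inl i) = -(v (Sum.inl i) * v (Sum.inr i)) :=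
      fun i => by ring
    simp [h]
  -- constants
  set C : ℝ := ((m + m : ℕ) : ℝ) with hC
  have hC0 : (0 : ℝ) ≤ C := Nat.cast_nonneg _
  have hcard : (Fintype.card (Fin m ⊕ Fin m) : ℝ) = C := by
    simp [hC]
  have hM0 : 0 ≤ M := le_trans (norm_nonneg _) (hΨbdd 1 one_pos)
  set L : ℝ := C * max 0 ((|lam| * c₁ + c₂) * M) with hL
  have hL0 : 0 ≤ L := mul_nonneg hC0 (le_max_left _ _)
  -- entrywise bound on the coefficient matrix
  have hAbd : ∀ x : ℝ, 0 < x → ∀ i j, |(lam • E x + F x) i j| ≤ |lam| * c₁ + c₂ := by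
    intro x hx i j
    have h1 : |lam * E x i j| ≤ |lam| * c₁ := by
      rw [abs_mul]
      exact mul_le_mul_of_nonneg_left (hEbdd x hx i j) (abs_nonneg lam)
    calc |(lam • E x + F x) i j| = |lam * E x i j + F x i j| := by
          simp [Matrix.add_apply, Matrix.smul_apply, smul_eq_mul]
    _ ≤ |lam * E x i j| + |F x i j| := abs_add_le _ _
    _ ≤ |lam| * c₁ + c₂ := add_le_add h1 (hFbdd x hx i j)
  -- derivative bound
  have hΨ'bdd : ∀ x : ℝ, 0 < x → ‖Ψ' x‖ ≤ L := by
    intro x hx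
    have hrw : ‖Ψ' x‖ = ‖J.mulVec (J.mulVec (Ψ' x))‖ := by rw [hJJ, norm_neg]
    rw [hrw, heq x hx]
    refine le_trans (hJle _) ?_
    refine (pi_norm_le_iff_of_nonneg hL0).2 fun i => ?_
    have hentry : (lam • E x + F x).mulVec (Ψ x) i
        = ∑ j, (lam • E x + F x) i j * Ψ x j := by
      simp [Matrix.mulVec, dotProduct]
    rw [Real.norm_eq_abs, hentry]
    calc |∑ j, (lam • E x + F x) i j * Ψ x j|
        ≤ ∑ j, |(lam • E x + F x) i j * Ψ x j| := Finset.abs_sum_le_sum_abs _ _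
    _ ≤ ∑ _j : Fin m ⊕ Fin m, (|lam| * c₁ + c₂) * M := by
        refine Finset.sum_le_sum fun j _ => ?_
        rw [abs_mul]
        have h1 := hAbd x hx i j
        have h2 : |Ψ x j| ≤ M := le_trans
          (by simpa [Real.norm_eq_abs] using norm_le_pi_norm (Ψ x) j) (hΨbdd x hx)
        exact mul_le_mul h1 h2 (abs_nonneg _) (le_trans (abs_nonneg _) h1)
    _ = C * ((|lam| * c₁ + c₂) * M) := by
        rw [Finset.sum_const, Finset.card_univ, nsmul_eq_mul]
        simp [hC]
    _ ≤ L := mul_le_mul_of_nonneg_left (le_max_right _ _) hC0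
  -- Lipschitz bound on (0,∞)
  have hLip : ∀ x ∈ Ioi (0 : ℝ), ∀ y ∈ Ioi (0 : ℝ), ‖Ψ x - Ψ y‖ ≤ L * |x - y| := by
    intro x hx y hy
    have := (convex_Ioi (0 : ℝ)).norm_image_sub_le_of_norm_hasDerivWithin_le
      (f := Ψ) (f' := Ψ') (C := L)
      (fun z hz => (hΨ z hz).hasDerivWithinAt) (fun z hz => hΨ'bdd z hz) hy hx
    simpa [Real.norm_eq_abs] using this
  -- the key pointwise bound
  set A : ℝ := (C * L) ^ 2 + (C * M) ^ 2 with hA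
  have hkey : ∀ p : ℝ × ℝ, p ∈ Ioi (0 : ℝ) ×ˢ Ioi (0 : ℝ) →
      ((J.mulVec (Ψ p.1) ⬝ᵥ Ψ p.2) / (p.1 - p.2)) ^ 2
        ≤ A * ‖Ψ p.2‖ ^ 2 * (1 + (p.1 - p.2) ^ 2)⁻¹ := by
    rintro ⟨x, y⟩ ⟨hx, hy⟩
    simp only at hx hy ⊢
    set num : ℝ := J.mulVec (Ψ x) ⬝ᵥ Ψ y with hnum
    set t : ℝ := x - y with ht
    have hb2 : |num| ≤ C * M * ‖Ψ y‖ := by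
      have hd := stmt9_abs_dot_le (J.mulVec (Ψ x)) (Ψ y)
      rw [hcard] at hd
      refine le_trans hd ?_
      have h1 : ‖J.mulVec (Ψ x)‖ ≤ M := le_trans (hJle _) (hΨbdd x hx)
      exact mul_le_mul_of_nonneg_right
        (mul_le_mul_of_nonneg_left h1 hC0) (norm_nonneg _)
    have hb1 : |num| ≤ C * L * ‖Ψ y‖ * |t| := by
      have hsplit : num = J.mulVec (Ψ x - Ψ y) ⬝ᵥ Ψ y := by
        rw [Matrix.mulVec_sub, sub_dotProduct, hJzero, sub_zero]
      rw [hsplit]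
      have hd := stmt9_abs_dot_le (J.mulVec (Ψ x - Ψ y)) (Ψ y)
      rw [hcard] at hd
      refine le_trans hd ?_
      have h1 : ‖J.mulVec (Ψ x - Ψ y)‖ ≤ L * |t| := le_trans (hJle _) (hLip x hx y hy)
      calc C * ‖J.mulVec (Ψ x - Ψ y)‖ * ‖Ψ y‖ ≤ C * (L * |t|) * ‖Ψ y‖ :=
            mul_le_mul_of_nonneg_right (mul_le_mul_of_nonneg_left h1 hC0) (norm_nonneg _)
      _ = C * L * ‖Ψ y‖ * |t| := by ring
    have hpos : (0 : ℝ) < 1 + t ^ 2 := by positivity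
    rw [← div_eq_mul_inv, le_div_iff₀ hpos]
    have f1 : (num / t) ^ 2 ≤ (C * L * ‖Ψ y‖) ^ 2 := by
      rcases eq_or_ne t 0 with h0 | h0
      · rw [h0, div_zero]
        simpa using sq_nonneg (C * L * ‖Ψ y‖)
      · have habs : |num / t| ≤ C * L * ‖Ψ y‖ := by
          rw [abs_div, div_le_iff₀ (abs_pos.2 h0)]
          exact hb1
        calc (num / t) ^ 2 = |num / t| ^ 2 := (sq_abs _).symm
        _ ≤ (C * L * ‖Ψ y‖) ^ 2 := pow_le_pow_left₀ (abs_nonneg _) habs 2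
    have f2 : (num / t * t) ^ 2 ≤ (C * M * ‖Ψ y‖) ^ 2 := by
      rcases eq_or_ne t 0 with h0 | h0
      · rw [h0, mul_zero]
        simpa using sq_nonneg (C * M * ‖Ψ y‖)
      · rw [div_mul_cancel₀ _ h0]
        calc num ^ 2 = |num| ^ 2 := (sq_abs _).symm
        _ ≤ (C * M * ‖Ψ y‖) ^ 2 := pow_le_pow_left₀ (abs_nonneg _) hb2 2
    calc (num / t) ^ 2 * (1 + t ^ 2) = (num / t) ^ 2 + (num / t * t) ^ 2 := by ring
    _ ≤ (C * L * ‖Ψ y‖) ^ 2 + (C * M * ‖Ψ y‖) ^ 2 := add_le_add f1 f2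
    _ = A * ‖Ψ y‖ ^ 2 := by rw [hA]; ring
  -- measurability
  have hsmeas : MeasurableSet (Ioi (0 : ℝ) ×ˢ Ioi (0 : ℝ)) :=
    measurableSet_Ioi.prod measurableSet_Ioi
  have hnumcont : ContinuousOn (fun p : ℝ × ℝ => J.mulVec (Ψ p.1) ⬝ᵥ Ψ p.2)
      (Ioi (0 : ℝ) ×ˢ Ioi (0 : ℝ)) := by
    have hfst : ∀ j, ContinuousOn (fun p : ℝ × ℝ => Ψ p.1 j) (Ioi (0:ℝ) ×ˢ Ioi (0:ℝ)) :=
      fun j => (continuous_apply j).comp_continuousOn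
        (hΨcont.comp continuousOn_fst fun p hp => hp.1)
    have hsnd : ∀ j, ContinuousOn (fun p : ℝ × ℝ => Ψ p.2 j) (Ioi (0:ℝ) ×ˢ Ioi (0:ℝ)) :=
      fun j => (continuous_apply j).comp_continuousOn
        (hΨcont.comp continuousOn_snd fun p hp => hp.2)
    simp only [Matrix.mulVec, dotProduct]
    exact continuousOn_finset_sum _ fun i _ =>
      (continuousOn_finset_sum _ fun j _ => continuousOn_const.mul (hfst j)).mul (hsnd i)
  have haesm : AEStronglyMeasurable
      (fun p : ℝ × ℝ => ((J.mulVec (Ψ p.1) ⬝ᵥ Ψ p.2) / (p.1 - p.2)) ^ 2)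
      (volume.restrict (Ioi (0 : ℝ) ×ˢ Ioi (0 : ℝ))) := by
    have h1 : AEStronglyMeasurable (fun p : ℝ × ℝ => J.mulVec (Ψ p.1) ⬝ᵥ Ψ p.2)
        (volume.restrict (Ioi (0 : ℝ) ×ˢ Ioi (0 : ℝ))) :=
      hnumcont.aestronglyMeasurable hsmeas
    have h2i : AEStronglyMeasurable (fun p : ℝ × ℝ => (p.1 - p.2)⁻¹)
        (volume.restrict (Ioi (0 : ℝ) ×ˢ Ioi (0 : ℝ))) :=
      ((measurable_fst.sub measurable_snd).inv).aestronglyMeasurable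
    have h4 := (h1.mul h2i).mul (h1.mul h2i)
    refine h4.congr (Filter.Eventually.of_forall fun p => ?_)
    simp [Pi.mul_apply, sq, div_eq_mul_inv]
  -- the integrable majorant
  have hGd : Integrable (fun p : ℝ × ℝ =>
      (1 + (p.1 - p.2) ^ 2)⁻¹ * ((Ioi (0:ℝ)).indicator (fun y => A * ‖Ψ y‖ ^ 2) p.2)) := by
    have hf : Integrable ((Ioi (0:ℝ)).indicator fun y => A * ‖Ψ y‖ ^ 2) := by
      rw [integrable_indicator_iff measurableSet_Ioi]
      exact hΨL2.const_mul A
    have hg : Integrable (fun t : ℝ => (1 + t ^ 2)⁻¹) := integrable_inv_one_add_sq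
    have hprod : Integrable (fun q : ℝ × ℝ =>
        (1 + q.1 ^ 2)⁻¹ * ((Ioi (0:ℝ)).indicator (fun y => A * ‖Ψ y‖ ^ 2) q.2))
        ((volume : Measure ℝ).prod volume) := hg.mul_prod hf
    have hMP := measurePreserving_sub_prod (volume : Measure ℝ) volume
    have hcomp := (hMP.integrable_comp hprod.1).2 hprod
    rw [Measure.volume_eq_prod]
    exact hcomp
  -- conclude by domination
  refine Integrable.mono' hGd.integrableOn haesm ?_
  filter_upwards [ae_restrict_mem hsmeas] with p hp
  rw [Real.norm_eq_abs, abs_of_nonneg (sq_nonneg _)]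
  have hk := hkey p hp
  rw [Set.indicator_of_mem hp.2]
  exact hk.trans_eq (by ring)
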